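/- Suppose w_1, …, w_m : ℝ → ℂ are differentiable and satisfy dw_j/dt = a_j · conj(w_1 ⋯ w_{j-1} w_{j+1} ⋯ w_m) for j = 1, …, m, where a_1, …, a_m ∈ ℝ. Then the function t ↦ Im(w_1(t) w_2(t) ⋯ w_m(t)) is constant. -/

import Mathlib

theorem stmt5 {m : ℕ} (a : Fin m → ℝ) (w : Fin m → ℝ → ℂ)
    (hw : ∀ j t, HasDerivAt (w j)
      ((a j : ℂ) * (starRingEnd ℂ) (∏ k ∈ Finset.univ.erase j, w k t)) t) :
    ∀ t s : ℝ, (∏ j, w j t).im = (∏ j, w j s).im := by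
  have key : ∀ t : ℝ, HasDerivAt (fun t => (∏ j, w j t).im) 0 t := by
    intro t
    have hP : HasDerivAt (fun t => ∏ j, w j t)
        (∑ j, (∏ k ∈ Finset.univ.erase j, w k t) •
          ((a j : ℂ) * (starRingEnd ℂ) (∏ k ∈ Finset.univ.erase j, w k t))) t :=
      HasDerivAt.fun_finsetProd (fun j _ => hw j t)
    have him := Complex.imCLM.hasFDerivAt.comp_hasDerivAt t hP
    convert him using 1
    · rfl
    · rfl
    · rfl
    simp only [Complex.imCLM_apply, map_sum, smul_eq_mul]
    rw [eq_comm, Finset.sum_eq_zero]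
    intro j _
    set c := ∏ k ∈ Finset.univ.erase j, w k t
    have : c * ((a j : ℂ) * (starRingEnd ℂ) c) = (a j : ℂ) * (c * (starRingEnd ℂ) c) := by ring
    rw [this, Complex.mul_conj]
    simp
  intro t s
  exact is_const_of_deriv_eq_zero (fun x => (key x).differentiableAt)
    (fun x => (key x).deriv) t s
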